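/- A ring R is almost Armendariz if and only if the polynomial ring R[x] is almost Armendariz. -/

import Mathlib

/-- An element `a` of a ring `R` is *strongly nilpotent* if every sequence
`a₀ = a`, `aₙ₊₁ ∈ aₙ R aₙ` is eventually zero. -/
def IsStronglyNilpotent {R : Type*} [Ring R] (a : R) : Prop :=
  ∀ s : ℕ → R, s 0 = a → (∀ n : ℕ, ∃ r : R, s (n + 1) = s n * r * s n) → ∃ n : ℕ, s n = 0

/-- The prime radical `P(R)` of a ring `R`: the intersection of all prime two-sided
ideals of `R`, equivalently the set of strongly nilpotent elements of `R`. -/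
def primeRadical (R : Type*) [Ring R] : Set R :=
  {a : R | IsStronglyNilpotent a}

/-- A ring `R` is *almost Armendariz* if whenever `f, g ∈ R[x]` satisfy `f g = 0`, every
product of a coefficient of `f` with a coefficient of `g` lies in the prime radical `P(R)`. -/
def IsAlmostArmendariz (R : Type*) [Ring R] : Prop :=
  ∀ f g : Polynomial R, f * g = 0 → ∀ i j : ℕ, f.coeff i * g.coeff j ∈ primeRadical R

/-- A subset of a ring that is a two-sided ideal. -/
def IsIdealSet {R : Type*} [Ring R] (I : Set R) : Prop :=
  (0 : R) ∈ I ∧ (∀ x ∈ I, ∀ y ∈ I, x + y ∈ I) ∧ (∀ x ∈ I, -x ∈ I) ∧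
  (∀ x ∈ I, ∀ r : R, r * x ∈ I) ∧ (∀ x ∈ I, ∀ r : R, x * r ∈ I)

/-- A prime two-sided ideal (as a set). -/
def IsPrimeIdealSet {R : Type*} [Ring R] (I : Set R) : Prop :=
  IsIdealSet I ∧ ∀ a b : R, (∀ r : R, a * r * b ∈ I) → a ∈ I ∨ b ∈ I

section Char

variable {R : Type*} [Ring R]

/-- Monotone absorption of the sequence in an ideal. -/
lemma seq_mem_of_mem {s : ℕ → R} (hs : ∀ n : ℕ, ∃ r : R, s (n + 1) = s n * r * s n)
    {I : Set R} (hI : IsIdealSet I) {m : ℕ} (hm : s m ∈ I) : ∀ t, m ≤ t → s t ∈ I := by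
  intro t ht
  induction t with
  | zero => exact Nat.le_zero.mp ht ▸ hm
  | succ n ih =>
    rcases Nat.lt_or_ge m (n+1) with h | h
    · have hn : s n ∈ I := ih (by omega)
      obtain ⟨r, hr⟩ := hs n
      rw [hr]
      exact hI.2.2.2.2 _ (hI.2.2.2.2 _ hn r) _
    · have : m = n + 1 := by omega
      exact this ▸ hm

/-- The two-sided ideal generated by `M ∪ {c}` when `M` is an ideal. -/
def idealPlus (M : Set R) (c : R) : Set R :=
  {x : R | ∃ m ∈ M, ∃ z ∈ AddSubgroup.closure {y : R | ∃ u v : R, y = u * c * v}, x = m + z}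

lemma mul_left_mem_closure_cross (c : R) (r : R) {z : R}
    (hz : z ∈ AddSubgroup.closure {y : R | ∃ u v : R, y = u * c * v}) :
    r * z ∈ AddSubgroup.closure {y : R | ∃ u v : R, y = u * c * v} := by
  induction hz using AddSubgroup.closure_induction with
  | mem x hx =>
    obtain ⟨u, v, rfl⟩ := hx
    exact AddSubgroup.subset_closure ⟨r * u, v, by noncomm_ring⟩
  | zero => simpa using AddSubgroup.zero_mem _
  | add x y hx hy ihx ihy => rw [mul_add]; exact AddSubgroup.add_mem _ ihx ihy
  | neg x hx ihx => rw [mul_neg]; exact AddSubgroup.neg_mem _ ihx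

lemma mul_right_mem_closure_cross (c : R) (r : R) {z : R}
    (hz : z ∈ AddSubgroup.closure {y : R | ∃ u v : R, y = u * c * v}) :
    z * r ∈ AddSubgroup.closure {y : R | ∃ u v : R, y = u * c * v} := by
  induction hz using AddSubgroup.closure_induction with
  | mem x hx =>
    obtain ⟨u, v, rfl⟩ := hx
    exact AddSubgroup.subset_closure ⟨u, v * r, by noncomm_ring⟩
  | zero => simpa using AddSubgroup.zero_mem _
  | add x y hx hy ihx ihy => rw [add_mul]; exact AddSubgroup.add_mem _ ihx ihy
  | neg x hx ihx => rw [neg_mul]; exact AddSubgroup.neg_mem _ ihx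

lemma isIdealSet_idealPlus {M : Set R} (hM : IsIdealSet M) (c : R) :
    IsIdealSet (idealPlus M c) := by
  refine ⟨⟨0, hM.1, 0, AddSubgroup.zero_mem _, by simp⟩, ?_, ?_, ?_, ?_⟩
  · rintro x ⟨m, hm, z, hz, rfl⟩ y ⟨m', hm', z', hz', rfl⟩
    exact ⟨m + m', hM.2.1 _ hm _ hm', z + z', AddSubgroup.add_mem _ hz hz', by abel⟩
  · rintro x ⟨m, hm, z, hz, rfl⟩
    exact ⟨-m, hM.2.2.1 _ hm, -z, AddSubgroup.neg_mem _ hz, by abel⟩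
  · rintro x ⟨m, hm, z, hz, rfl⟩ r
    exact ⟨r * m, hM.2.2.2.1 _ hm _, r * z, mul_left_mem_closure_cross c r hz, by rw [mul_add]⟩
  · rintro x ⟨m, hm, z, hz, rfl⟩ r
    exact ⟨m * r, hM.2.2.2.2 _ hm _, z * r, mul_right_mem_closure_cross c r hz, by rw [add_mul]⟩

lemma subset_idealPlus {M : Set R} (hM : IsIdealSet M) (c : R) : M ⊆ idealPlus M c :=
  fun x hx => ⟨x, hx, 0, AddSubgroup.zero_mem _, by simp⟩

lemma self_mem_idealPlus {M : Set R} (hM : IsIdealSet M) (c : R) : c ∈ idealPlus M c :=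
  ⟨0, hM.1, c, AddSubgroup.subset_closure ⟨1, 1, by simp⟩, by simp⟩

/-- The key cross-product lemma: if `a R b ⊆ M` then any element of the closure for `a`
times anything times any element of the closure for `b` is in `M`. -/
lemma cross_mul_mem {M : Set R} (hM : IsIdealSet M) {a b : R}
    (hab : ∀ r : R, a * r * b ∈ M) (w : R) {z₁ z₂ : R}
    (h₁ : z₁ ∈ AddSubgroup.closure {y : R | ∃ u v : R, y = u * a * v})
    (h₂ : z₂ ∈ AddSubgroup.closure {y : R | ∃ u v : R, y = u * b * v}) :
    z₁ * w * z₂ ∈ M := by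
  induction h₁ using AddSubgroup.closure_induction with
  | mem x hx =>
    obtain ⟨u, v, rfl⟩ := hx
    induction h₂ using AddSubgroup.closure_induction with
    | mem y hy =>
      obtain ⟨p, q, rfl⟩ := hy
      have key : a * (v * (w * p)) * b ∈ M := hab _
      have := hM.2.2.2.2 _ (hM.2.2.2.1 _ key u) q
      have heq : u * (a * (v * (w * p)) * b) * q = u * a * v * w * (p * b * q) := by
        noncomm_ring
      rwa [heq] at this
    | zero => simpa using hM.1
    | add y y' hy hy' ihy ihy' =>
      have := hM.2.1 _ ihy _ ihy'
      rwa [← mul_add] at this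
    | neg y hy ihy =>
      have := hM.2.2.1 _ ihy
      rwa [← mul_neg] at this
  | zero => simpa [zero_mul] using hM.1
  | add x x' hx hx' ihx ihx' =>
    have := hM.2.1 _ ihx _ ihx'
    rwa [← add_mul, ← add_mul] at this
  | neg x hx ihx =>
    have := hM.2.2.1 _ ihx
    rwa [← neg_mul, ← neg_mul] at this

/-- If `a` is not strongly nilpotent, there is a prime ideal avoiding it. -/
lemma exists_prime_not_mem {a : R} (ha : ¬ IsStronglyNilpotent a) :
    ∃ P : Set R, IsPrimeIdealSet P ∧ a ∉ P := by
  simp only [IsStronglyNilpotent, not_forall] at ha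
  obtain ⟨s, hs0, hstep, hne⟩ := ha
  push_neg at hne
  set S : Set (Set R) := {I | IsIdealSet I ∧ ∀ n, s n ∉ I} with hS
  have h0 : ({0} : Set R) ∈ S := by
    refine ⟨⟨rfl, ?_, ?_, ?_, ?_⟩, fun n hn => hne n (by simpa using hn)⟩ <;>
      simp +contextual [Set.mem_singleton_iff]
  have hchainS : ∀ c ⊆ S, IsChain (· ⊆ ·) c → c.Nonempty →
      ∃ ub ∈ S, ∀ t ∈ c, t ⊆ ub := by
    intro c hcS hchain hcne
    refine ⟨⋃₀ c, ⟨⟨?_, ?_, ?_, ?_, ?_⟩, ?_⟩, fun t ht => Set.subset_sUnion_of_mem ht⟩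
    · obtain ⟨I, hI⟩ := hcne
      exact ⟨I, hI, (hcS hI).1.1⟩
    · rintro x ⟨I, hI, hxI⟩ y ⟨J, hJ, hyJ⟩
      rcases hchain.total hI hJ with h | h
      · exact ⟨J, hJ, (hcS hJ).1.2.1 _ (h hxI) _ hyJ⟩
      · exact ⟨I, hI, (hcS hI).1.2.1 _ hxI _ (h hyJ)⟩
    · rintro x ⟨I, hI, hxI⟩
      exact ⟨I, hI, (hcS hI).1.2.2.1 _ hxI⟩
    · rintro x ⟨I, hI, hxI⟩ r
      exact ⟨I, hI, (hcS hI).1.2.2.2.1 _ hxI _⟩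
    · rintro x ⟨I, hI, hxI⟩ r
      exact ⟨I, hI, (hcS hI).1.2.2.2.2 _ hxI _⟩
    · rintro n ⟨I, hI, hnI⟩
      exact (hcS hI).2 n hnI
  obtain ⟨M, hM0, hMmax⟩ := zorn_subset_nonempty S hchainS {0} h0
  have hMS : M ∈ S := hMmax.1
  have hMideal : IsIdealSet M := hMS.1
  refine ⟨M, ⟨hMideal, ?_⟩, by simpa [← hs0] using hMS.2 0⟩
  intro x y hxy
  by_contra hcon
  push_neg at hcon
  obtain ⟨hx, hy⟩ := hcon
  -- The enlarged ideals must hit the sequence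
  have hhit : ∀ c : R, c ∉ M → ∃ n, s n ∈ idealPlus M c := by
    intro c hc
    by_contra hno
    push_neg at hno
    have : idealPlus M c ∈ S := ⟨isIdealSet_idealPlus hMideal c, hno⟩
    have hsub := hMmax.2 this (subset_idealPlus hMideal c)
    exact hc (hsub (self_mem_idealPlus hMideal c))
  obtain ⟨m, hm⟩ := hhit x hx
  obtain ⟨n, hn⟩ := hhit y hy
  have hmx : s (max m n) ∈ idealPlus M x :=
    seq_mem_of_mem hstep (isIdealSet_idealPlus hMideal x) hm _ (le_max_left _ _)
  have hny : s (max m n) ∈ idealPlus M y :=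
    seq_mem_of_mem hstep (isIdealSet_idealPlus hMideal y) hn _ (le_max_right _ _)
  obtain ⟨r, hr⟩ := hstep (max m n)
  obtain ⟨m₁, hm₁, z₁, hz₁, he₁⟩ := hmx
  obtain ⟨m₂, hm₂, z₂, hz₂, he₂⟩ := hny
  have t1 : m₁ * (r * (m₂ + z₂)) ∈ M := hMideal.2.2.2.2 _ hm₁ _
  have t2 : z₁ * r * m₂ ∈ M := by
    rw [mul_assoc]; exact hMideal.2.2.2.1 _ (hMideal.2.2.2.1 _ hm₂ r) z₁
  have t3 : z₁ * r * z₂ ∈ M := cross_mul_mem hMideal hxy r hz₁ hz₂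
  have : s (max m n + 1) ∈ M := by
    rw [hr]
    nth_rewrite 2 [he₂]
    rw [he₁]
    have heq : (m₁ + z₁) * r * (m₂ + z₂) =
        m₁ * (r * (m₂ + z₂)) + (z₁ * r * m₂ + z₁ * r * z₂) := by noncomm_ring
    rw [heq]
    exact hMideal.2.1 _ t1 _ (hMideal.2.1 _ t2 _ t3)
  exact hMS.2 _ this

end Char

section Char2

variable {R : Type*} [Ring R]

/-- Strongly nilpotent elements belong to every prime ideal. -/
lemma mem_of_isStronglyNilpotent {a : R} (ha : IsStronglyNilpotent a)
    {P : Set R} (hP : IsPrimeIdealSet P) : a ∈ P := by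
  by_contra haP
  -- build a sequence staying outside P
  have step : ∀ x : R, x ∉ P → ∃ r : R, x * r * x ∉ P := by
    intro x hx
    by_contra h
    push_neg at h
    rcases hP.2 x x h with h' | h' <;> exact hx h'
  let t : ℕ → {x : R // x ∉ P} := fun n =>
    Nat.rec ⟨a, haP⟩ (fun _ p => ⟨p.1 * (step p.1 p.2).choose * p.1,
      (step p.1 p.2).choose_spec⟩) n
  obtain ⟨n, hn⟩ := ha (fun n => (t n).1) rfl
    (fun n => ⟨(step (t n).1 (t n).2).choose, rfl⟩)
  exact (t n).2 (hn ▸ hP.1.1)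

theorem isStronglyNilpotent_iff_forall_prime (a : R) :
    IsStronglyNilpotent a ↔ ∀ P : Set R, IsPrimeIdealSet P → a ∈ P := by
  constructor
  · exact fun ha P hP => mem_of_isStronglyNilpotent ha hP
  · intro h
    by_contra ha
    obtain ⟨P, hP, haP⟩ := exists_prime_not_mem ha
    exact haP (h P hP)

lemma zero_mem_primeRadical : (0 : R) ∈ primeRadical R :=
  fun s hs0 _ => ⟨0, hs0⟩

lemma add_mem_primeRadical {a b : R} (ha : a ∈ primeRadical R) (hb : b ∈ primeRadical R) :
    a + b ∈ primeRadical R := by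
  rw [primeRadical, Set.mem_setOf_eq, isStronglyNilpotent_iff_forall_prime] at *
  exact fun P hP => hP.1.2.1 _ (ha P hP) _ (hb P hP)

end Char2

section Poly

open Polynomial

variable {R : Type*} [Ring R]

/-- Contraction of a prime ideal of `R[X]` to `R` is prime. -/
lemma contraction_prime {Q : Set (Polynomial R)} (hQ : IsPrimeIdealSet Q) :
    IsPrimeIdealSet {a : R | (C a : Polynomial R) ∈ Q} := by
  obtain ⟨⟨h0, hadd, hneg, hml, hmr⟩, hpr⟩ := hQ
  refine ⟨⟨by simpa using h0, ?_, ?_, ?_, ?_⟩, ?_⟩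
  · intro x hx y hy; simpa [map_add] using hadd _ hx _ hy
  · intro x hx; simpa [map_neg] using hneg _ hx
  · intro x hx r; simpa [map_mul] using hml _ hx (C r)
  · intro x hx r; simpa [map_mul] using hmr _ hx (C r)
  · intro a b hab
    have key : ∀ f : Polynomial R, C a * f * C b ∈ Q := by
      intro f
      induction f using Polynomial.induction_on' with
      | add p q hp hq =>
        have h' := hadd _ hp _ hq
        have heq : C a * (p + q) * C b = C a * p * C b + C a * q * C b := by noncomm_ring
        rw [heq]; exact h'
      | monomial n c =>
        have hc : C a * monomial n c * C b = C (a * c * b) * X ^ n := by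
          rw [Polynomial.C_mul_monomial, Polynomial.monomial_mul_C,
            Polynomial.C_mul_X_pow_eq_monomial]
        rw [hc]
        exact hmr _ (hab c) _
    rcases hpr (C a) (C b) key with h | h
    · exact Or.inl h
    · exact Or.inr h

/-- A polynomial with all coefficients in the prime radical is strongly nilpotent. -/
lemma poly_mem_primeRadical_of_coeffs {f : Polynomial R}
    (hf : ∀ n, f.coeff n ∈ primeRadical R) : f ∈ primeRadical (Polynomial R) := by
  rw [primeRadical, Set.mem_setOf_eq, isStronglyNilpotent_iff_forall_prime]
  intro Q hQ
  have hcoeff : ∀ n, (C (f.coeff n) : Polynomial R) ∈ Q := by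
    intro n
    have := hf n
    rw [primeRadical, Set.mem_setOf_eq, isStronglyNilpotent_iff_forall_prime] at this
    exact this _ (contraction_prime hQ)
  nth_rewrite 1 [f.as_sum_support]
  refine Finset.sum_induction _ (· ∈ Q) (fun x y hx hy => hQ.1.2.1 _ hx _ hy) hQ.1.1 ?_
  intro n _
  rw [← Polynomial.C_mul_X_pow_eq_monomial]
  exact hQ.1.2.2.2.2 _ (hcoeff n) _

/-- `C a` strongly nilpotent in `R[X]` implies `a` strongly nilpotent in `R`. -/
lemma isStronglyNilpotent_of_C {a : R}
    (h : IsStronglyNilpotent (C a : Polynomial R)) : IsStronglyNilpotent a := by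
  intro s hs0 hstep
  obtain ⟨n, hn⟩ := h (fun n => C (s n)) (show C (s 0) = C a by rw [hs0])
    (fun n => by
      obtain ⟨r, hr⟩ := hstep n
      exact ⟨C r, show C (s (n+1)) = C (s n) * C r * C (s n) by
        rw [hr, map_mul, map_mul]⟩)
  exact ⟨n, by simpa using hn⟩

end Poly

section Main

open Polynomial

variable {R : Type*} [Ring R]

lemma coeff_eval₂_X_pow {k : ℕ} (P : Polynomial (Polynomial R))
    (hP : ∀ n, (P.coeff n).natDegree < k) (i s : ℕ) (hs : s < k) :
    (Polynomial.eval₂ (RingHom.id _) ((X : Polynomial R) ^ k) P).coeff (k * i + s)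
      = (P.coeff i).coeff s := by
  rw [Polynomial.eval₂_eq_sum, Polynomial.sum_def, Polynomial.finset_sum_coeff]
  have hterm : ∀ n : ℕ, (RingHom.id (Polynomial R) (P.coeff n) * ((X : Polynomial R) ^ k) ^ n).coeff (k * i + s)
      = if k * n ≤ k * i + s then (P.coeff n).coeff (k * i + s - k * n) else 0 := by
    intro n
    rw [RingHom.id_apply, ← pow_mul, Polynomial.coeff_mul_X_pow']
  rw [Finset.sum_congr rfl (fun n _ => hterm n)]
  rw [Finset.sum_eq_single i]
  · by_cases hi : k * i ≤ k * i + s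
    · rw [if_pos hi]
      congr 1
      omega
    · omega
  · intro n _ hn
    rcases Nat.lt_or_ge n i with h | h
    · rw [if_pos (by nlinarith)]
      apply Polynomial.coeff_eq_zero_of_natDegree_lt
      have h1 : k * n + k ≤ k * i := by
        calc k * n + k = k * (n + 1) := by ring
        _ ≤ k * i := Nat.mul_le_mul_left k h
      have h2 : k ≤ k * i + s - k * n := by omega
      exact lt_of_lt_of_le (hP n) h2
    · have h' : i < n := lt_of_le_of_ne h (Ne.symm hn)
      rw [if_neg]
      have : k * i + k ≤ k * n := by
        calc k * i + k = k * (i + 1) := by ring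
        _ ≤ k * n := Nat.mul_le_mul_left k h'
      omega
  · intro hi
    rw [Polynomial.notMem_support_iff] at hi
    rw [hi]
    simp

theorem almostArmendariz_iff_polynomial' {R : Type*} [Ring R] :
    IsAlmostArmendariz R ↔ IsAlmostArmendariz (Polynomial R) := by
  constructor
  · -- forward direction
    intro hAA F G hFG i j
    -- bound on the degrees of all coefficients
    set k : ℕ := (F.support.sup fun n => (F.coeff n).natDegree)
      ⊔ (G.support.sup fun n => (G.coeff n).natDegree) + 1 with hk
    have hFk : ∀ n, (F.coeff n).natDegree < k := by
      intro n
      by_cases hn : n ∈ F.support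
      · exact lt_of_le_of_lt (le_trans (Finset.le_sup (f := fun m => (F.coeff m).natDegree) hn)
          le_sup_left) (Nat.lt_succ_self _)
      · rw [Polynomial.notMem_support_iff] at hn
        rw [hn]
        simpa [hk] using Nat.succ_pos _
    have hGk : ∀ n, (G.coeff n).natDegree < k := by
      intro n
      by_cases hn : n ∈ G.support
      · exact lt_of_le_of_lt (le_trans (Finset.le_sup (f := fun m => (G.coeff m).natDegree) hn)
          le_sup_right) (Nat.lt_succ_self _)
      · rw [Polynomial.notMem_support_iff] at hn
        rw [hn]
        simpa [hk] using Nat.succ_pos _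
    -- the substitution y ↦ X^k
    set φ : Polynomial (Polynomial R) →+* Polynomial R :=
      Polynomial.eval₂RingHom' (RingHom.id _) ((X : Polynomial R) ^ k)
        (fun p => ((Polynomial.commute_X p).symm.pow_right k)) with hφ
    have hφapply : ∀ P : Polynomial (Polynomial R),
        φ P = Polynomial.eval₂ (RingHom.id _) ((X : Polynomial R) ^ k) P := fun _ => rfl
    have hzero : φ F * φ G = 0 := by
      rw [← map_mul, hFG, map_zero]
    have hmem : ∀ s t : ℕ, (F.coeff i).coeff s * (G.coeff j).coeff t ∈ primeRadical R := by
      intro s t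
      rcases Nat.lt_or_ge s k with hs | hs
      · rcases Nat.lt_or_ge t k with ht | ht
        · have := hAA (φ F) (φ G) hzero (k * i + s) (k * j + t)
          rwa [hφapply, hφapply, coeff_eval₂_X_pow F hFk i s hs,
            coeff_eval₂_X_pow G hGk j t ht] at this
        · rw [Polynomial.coeff_eq_zero_of_natDegree_lt (lt_of_lt_of_le (hGk j) ht), mul_zero]
          exact zero_mem_primeRadical
      · rw [Polynomial.coeff_eq_zero_of_natDegree_lt (lt_of_lt_of_le (hFk i) hs), zero_mul]
        exact zero_mem_primeRadical
    apply poly_mem_primeRadical_of_coeffs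
    intro n
    rw [Polynomial.coeff_mul]
    refine Finset.sum_induction _ (· ∈ primeRadical R)
      (fun x y hx hy => add_mem_primeRadical hx hy) zero_mem_primeRadical ?_
    intro p _
    exact hmem p.1 p.2
  · -- backward direction
    intro hAA f g hfg i j
    have hFG : (f.map (C : R →+* Polynomial R)) * (g.map (C : R →+* Polynomial R)) = 0 := by
      rw [← Polynomial.map_mul, hfg, Polynomial.map_zero]
    have := hAA _ _ hFG i j
    rw [Polynomial.coeff_map, Polynomial.coeff_map, ← map_mul] at this
    exact isStronglyNilpotent_of_C this

end Main

/-- A ring `R` is almost Armendariz if and only if the polynomial ring `R[x]` is almost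
Armendariz. -/
theorem almostArmendariz_iff_polynomial {R : Type*} [Ring R] :
    IsAlmostArmendariz R ↔ IsAlmostArmendariz (Polynomial R) :=
  almostArmendariz_iff_polynomial'
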